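/- Let L be a first-order language with no relation symbols, and let M be an L-structure. Then M admits recursion (i.e., for every L-structure N there is a unique L-homomorphism from M to N) if and only if M admits induction (i.e., the only L-substructure of M is M itself), every interpreted function of M is injective, and the ranges of the interpreted functions of distinct function symbols (of any arities) are pairwise disjoint. -/

import Mathlib

open FirstOrder FirstOrder.Language FirstOrder.Language.Structure

universe u v w

namespace AlgebraRecAux

open scoped Classical

variable {L : FirstOrder.Language.{u, v}}

/-- The list of subterms of a term. -/
def subterms {α : Type*} : L.Term α → List (L.Term α)
  | .var x => [.var x]
  | .func f ts => .func f ts :: (List.finRange _).flatMap fun i => subterms (ts i)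

theorem mem_subterms_self {α : Type*} (t : L.Term α) : t ∈ subterms t := by
  cases t <;> simp [subterms]

theorem mem_subterms_of_arg {α : Type*} {k : ℕ} (f : L.Functions k) (ts : Fin k → L.Term α)
    (i : Fin k) {s : L.Term α} (hs : s ∈ subterms (ts i)) :
    s ∈ subterms (Term.func f ts) := by
  simp only [subterms, List.mem_cons, List.mem_flatMap]
  exact Or.inr ⟨i, List.mem_finRange i, hs⟩

theorem arg_mem_subterms {α : Type*} (T : L.Term α) :
    ∀ {k : ℕ} (g : L.Functions k) (vs : Fin k → L.Term α),
      Term.func g vs ∈ subterms T → ∀ i, vs i ∈ subterms T := by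
  induction T with
  | var x =>
    intro k g vs h i
    simp [subterms] at h
  | func f ts ih =>
    intro k g vs h i
    rcases List.mem_cons.1 h with h | h
    · injection h with h1 h2 h3
      subst h1
      cases h2
      cases h3
      exact mem_subterms_of_arg _ _ i (mem_subterms_self _)
    · rw [List.mem_flatMap] at h
      obtain ⟨j, -, hj⟩ := h
      exact mem_subterms_of_arg f ts j (ih j g vs hj i)

/-- An invariant of closed terms: the index in the list of subterms of `T`. -/
noncomputable def inv (T : L.Term Empty) (s : L.Term Empty) : Option ℕ :=
  if s ∈ subterms T then some ((subterms T).idxOf s) else none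

theorem inv_inj {T : L.Term Empty} {s s' : L.Term Empty} (hs : s ∈ subterms T)
    (h : inv T s = inv T s') : s = s' := by
  by_cases hs' : s' ∈ subterms T
  · rw [inv, inv, if_pos hs, if_pos hs', Option.some.injEq] at h
    have h1 := List.getElem_idxOf (List.idxOf_lt_length_iff.2 hs)
    have h2 := List.getElem_idxOf (List.idxOf_lt_length_iff.2 hs')
    rw [← h1, ← h2]
    simp [h]
  · rw [inv, inv, if_pos hs, if_neg hs'] at h
    exact absurd h (by simp)

/-- The test structure used to distinguish closed terms. -/
noncomputable def tStr (T : L.Term Empty) : L.Structure (ULift.{w} (Option ℕ)) where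
  funMap {k} g zs :=
    if h : ∃ vs : Fin k → L.Term Empty, (∀ i, vs i ∈ subterms T) ∧
        (∀ i, ULift.up (inv T (vs i)) = zs i) then
      ULift.up (inv T (Term.func g h.choose))
    else ULift.up none
  RelMap _ _ := False

theorem tStr_funMap (T : L.Term Empty) {k : ℕ} (g : L.Functions k)
    (zs : Fin k → ULift.{w} (Option ℕ)) :
    @funMap L _ (tStr T) k g zs =
      if h : ∃ vs : Fin k → L.Term Empty, (∀ i, vs i ∈ subterms T) ∧
          (∀ i, ULift.up (inv T (vs i)) = zs i) then
        ULift.up (inv T (Term.func g h.choose))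
      else ULift.up none := rfl

theorem tStr_comp (T : L.Term Empty) {k : ℕ} (g : L.Functions k)
    (vs : Fin k → L.Term Empty) :
    @funMap L _ (tStr T) k g (fun i => ULift.up (inv T (vs i))) =
      ULift.up (inv T (Term.func g vs)) := by
  rw [tStr_funMap]
  by_cases hall : ∀ i, vs i ∈ subterms T
  · have hex : ∃ ws : Fin k → L.Term Empty, (∀ i, ws i ∈ subterms T) ∧
        (∀ i, ULift.up (inv T (ws i)) = ULift.up (inv T (vs i))) :=
      ⟨vs, hall, fun _ => rfl⟩
    rw [dif_pos hex]
    have hws : hex.choose = vs := by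
      funext i
      exact inv_inj (hex.choose_spec.1 i) (congrArg ULift.down (hex.choose_spec.2 i))
    rw [hws]
  · push_neg at hall
    obtain ⟨i0, hi0⟩ := hall
    have hnex : ¬ ∃ ws : Fin k → L.Term Empty, (∀ i, ws i ∈ subterms T) ∧
        (∀ i, ULift.up (inv T (ws i)) = ULift.up (inv T (vs i))) := by
      rintro ⟨ws, hws, hIe⟩
      have : ws i0 = vs i0 := inv_inj (hws i0) (congrArg ULift.down (hIe i0))
      exact hi0 (this ▸ hws i0)
    rw [dif_neg hnex]
    have hnm : Term.func g vs ∉ subterms T := fun hmem =>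
      hi0 (arg_mem_subterms T g vs hmem i0)
    rw [inv, if_neg hnm]

/-- If `M` admits recursion, then realization of closed terms in `M` is injective. -/
theorem term_realize_injective {M : Type w} [L.Structure M]
    (init : ∀ (N : Type w) [L.Structure N],
      ∃! h : M → N, ∀ (n : ℕ) (f : L.Functions n) (xs : Fin n → M),
        h (funMap f xs) = funMap f (h ∘ xs))
    (T U : L.Term Empty)
    (hTU : T.realize (Empty.elim : Empty → M) = U.realize Empty.elim) : T = U := by
  letI NS : L.Structure (ULift.{w} (Option ℕ)) := tStr T
  obtain ⟨h, hh, -⟩ := init (ULift.{w} (Option ℕ))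
  have hreal : ∀ s : L.Term Empty,
      h (s.realize Empty.elim) = ULift.up (inv T s) := by
    intro s
    induction s with
    | var x => exact x.elim
    | func g ts ih =>
      rw [Term.realize_func, hh _ g _]
      have hc : h ∘ (fun i => (ts i).realize Empty.elim) =
          fun i => ULift.up (inv T (ts i)) := funext ih
      rw [hc, tStr_comp]
  have hT : ULift.up (inv T T) = ULift.up (inv T U) := by
    rw [← hreal, ← hreal, hTU]
  exact inv_inj (mem_subterms_self T) (congrArg ULift.down hT)

end AlgebraRecAux

open AlgebraRecAux

/-- Let `L` be a first-order language with no relation symbols and `M` an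
`L`-structure.  Then `M` admits recursion (to every `L`-structure there is a
unique `L`-homomorphism from `M`) if and only if `M` admits induction (its
only substructure is itself), every interpreted function of `M` is injective,
and the ranges of the interpretations of distinct function symbols are
pairwise disjoint. -/
theorem algebra_admitsRecursion_iff {L : FirstOrder.Language.{u, v}}
    (hrel : ∀ n, IsEmpty (L.Relations n)) (M : Type w) [L.Structure M] :
    (∀ (N : Type w) [L.Structure N],
        ∃! h : M → N, ∀ (n : ℕ) (f : L.Functions n) (xs : Fin n → M),
          h (funMap f xs) = funMap f (h ∘ xs)) ↔
      ((∀ S : L.Substructure M, S = ⊤) ∧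
        (∀ (n : ℕ) (f : L.Functions n),
          Function.Injective (fun xs : Fin n → M => funMap f xs)) ∧
        (∀ (m n : ℕ) (f : L.Functions m) (g : L.Functions n),
          (⟨m, f⟩ : Σ k, L.Functions k) ≠ ⟨n, g⟩ →
            ∀ (xs : Fin m → M) (ys : Fin n → M),
              funMap f xs ≠ funMap g ys)) := by
  constructor
  · intro init
    have hind : ∀ S : L.Substructure M, S = ⊤ := by
      intro S
      rw [eq_top_iff]
      rintro m -
      obtain ⟨hS, hhS, -⟩ := init S
      obtain ⟨hid, hhid, huniq⟩ := init M
      have h1 : (fun m => ((hS m : S) : M)) = hid := by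
        apply huniq
        intro n f xs
        calc ((hS (funMap f xs) : S) : M) = ((funMap f (hS ∘ xs) : S) : M) :=
              congrArg _ (hhS n f xs)
          _ = funMap f (fun i => ((hS (xs i) : S) : M)) := S.subtype.map_fun f (hS ∘ xs)
      have h2 : (id : M → M) = hid := huniq _ (fun n f xs => rfl)
      have h3 : ((hS m : S) : M) = m := by
        have := congrFun (h1.trans h2.symm) m
        exact this
      exact h3 ▸ (hS m).2
    have hsurj : ∀ m : M, ∃ t : L.Term Empty, t.realize Empty.elim = m := by
      intro m
      let S : L.Substructure M :=
        { carrier := {m | ∃ t : L.Term Empty, t.realize Empty.elim = m}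
          fun_mem := by
            intro n f x hx
            choose t ht using hx
            exact ⟨Term.func f t, by
              rw [Term.realize_func]; exact congrArg _ (funext ht)⟩ }
      have : m ∈ S := by rw [hind S]; exact Substructure.mem_top m
      exact this
    refine ⟨hind, ?_, ?_⟩
    · intro n f xs ys hxy
      choose t ht using fun i => hsurj (xs i)
      choose u hu using fun i => hsurj (ys i)
      have hfu : Term.func f t = Term.func f u := by
        apply term_realize_injective init
        rw [Term.realize_func, Term.realize_func]
        exact (congrArg _ (funext ht)).trans (hxy.trans (congrArg _ (funext hu)).symm)
      injection hfu with h1 h2 h3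
      cases h2
      cases h3
      funext i
      rw [← ht i, ← hu i]
    · intro m n f g hne xs ys heq
      choose t ht using fun i => hsurj (xs i)
      choose u hu using fun i => hsurj (ys i)
      have hfu : Term.func f t = Term.func g u := by
        apply term_realize_injective init
        rw [Term.realize_func, Term.realize_func]
        exact (congrArg _ (funext ht)).trans (heq.trans (congrArg _ (funext hu)).symm)
      injection hfu with h1 h2 h3
      subst h1
      exact hne (congrArg (fun x => (⟨m, x⟩ : Σ k, L.Functions k)) (eq_of_heq h2))
  · rintro ⟨hind, hinj, hdisj⟩ N _
    classical
    letI PS : L.Structure (M × N) :=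
      { funMap := fun {k} g zs => (funMap g fun i => (zs i).1, funMap g fun i => (zs i).2)
        RelMap := fun _ _ => False }
    set B : L.Substructure (M × N) := ⊥ with hB
    have hdec : ∀ p ∈ B, ∃ (k : ℕ) (g : L.Functions k) (z : Fin k → M × N),
        (∀ i, z i ∈ B) ∧ funMap g z = p := by
      intro p hp
      let S' : L.Substructure (M × N) :=
        { carrier := {q | q ∈ B ∧ ∃ (k : ℕ) (g : L.Functions k) (z : Fin k → M × N),
            (∀ i, z i ∈ B) ∧ funMap g z = q}
          fun_mem := by
            intro k g z hz
            exact ⟨B.fun_mem g z (fun i => (hz i).1), k, g, z, fun i => (hz i).1, rfl⟩ }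
      exact ((bot_le : B ≤ S') hp).2
    have htot : ∀ m : M, ∃ nn : N, (m, nn) ∈ B := by
      intro m
      let S : L.Substructure M :=
        { carrier := {m | ∃ nn : N, (m, nn) ∈ B}
          fun_mem := by
            intro k g x hx
            choose ns hns using hx
            exact ⟨funMap g ns, B.fun_mem g (fun i => (x i, ns i)) hns⟩ }
      have : m ∈ S := by rw [hind S]; exact Substructure.mem_top m
      exact this
    have huniqB : ∀ (m : M) (n₁ n₂ : N), (m, n₁) ∈ B → (m, n₂) ∈ B → n₁ = n₂ := by
      let S : L.Substructure M :=
        { carrier := {m | ∀ n₁ n₂ : N, (m, n₁) ∈ B → (m, n₂) ∈ B → n₁ = n₂}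
          fun_mem := by
            intro k g x hx
            intro n₁ n₂ h1 h2
            obtain ⟨k₁, g₁, z, hz, hfz⟩ := hdec _ h1
            obtain ⟨k₂, g₂, wz, hw, hfw⟩ := hdec _ h2
            have hz1 : funMap g₁ (fun i => (z i).1) = funMap g x := congrArg Prod.fst hfz
            have hw1 : funMap g₂ (fun i => (wz i).1) = funMap g x := congrArg Prod.fst hfw
            have hsig1 : (⟨k₁, g₁⟩ : Σ k, L.Functions k) = ⟨k, g⟩ := by
              by_contra hne
              exact hdisj _ _ _ _ hne _ _ hz1
            have hsig2 : (⟨k₂, g₂⟩ : Σ k, L.Functions k) = ⟨k, g⟩ := by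
              by_contra hne
              exact hdisj _ _ _ _ hne _ _ hw1
            obtain ⟨rfl, hg1⟩ := Sigma.mk.inj_iff.1 hsig1
            obtain rfl : g₁ = g := eq_of_heq hg1
            obtain ⟨rfl, hg2⟩ := Sigma.mk.inj_iff.1 hsig2
            obtain rfl : g₂ = g₁ := eq_of_heq hg2
            have hzx : (fun i => (z i).1) = x := hinj _ _ hz1
            have hwx : (fun i => (wz i).1) = x := hinj _ _ hw1
            have hn1 : n₁ = funMap g₂ (fun i => (z i).2) := (congrArg Prod.snd hfz).symm
            have hn2 : n₂ = funMap g₂ (fun i => (wz i).2) := (congrArg Prod.snd hfw).symm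
            rw [hn1, hn2]
            congr 1
            funext i
            have hzi : (x i, (z i).2) ∈ B := by
              have hmem := hz i
              have : z i = (x i, (z i).2) := by rw [← congrFun hzx i]
              rwa [this] at hmem
            have hwi : (x i, (wz i).2) ∈ B := by
              have hmem := hw i
              have : wz i = (x i, (wz i).2) := by rw [← congrFun hwx i]
              rwa [this] at hmem
            exact hx i _ _ hzi hwi }
      intro m
      have : m ∈ S := by rw [hind S]; exact Substructure.mem_top m
      exact this
    choose h hmem using htot
    refine ⟨h, ?_, ?_⟩
    · intro k g x
      have h1 : (funMap g x, funMap g (h ∘ x)) ∈ B :=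
        B.fun_mem g (fun i => (x i, h (x i))) (fun i => hmem (x i))
      exact huniqB _ _ _ (hmem _) h1
    · intro h' hh'
      funext m
      let G : L.Substructure (M × N) :=
        { carrier := {p | p.2 = h' p.1}
          fun_mem := by
            intro k g z hz
            show funMap g (fun i => (z i).2) = h' (funMap g (fun i => (z i).1))
            rw [hh' k g]
            congr 1
            funext i
            exact hz i }
      have hg : (m, h m) ∈ G := (bot_le : B ≤ G) (hmem m)
      exact hg.symm
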